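/- Let G be the simple graph on vertex set {0, 1, 2, 3, 4, 5, 6} whose edge set consists of the heptagon edges {{0,1}, {1,2}, {2,3}, {3,4}, {4,5}, {5,6}, {6,0}} together with the chords {{0,2}, {2,4}, {4,6}, {0,4}} (a triangulation of the heptagon, hence a maximal outerplanar graph of order 7). Then for every integer k ≥ 0, G is k-edge magic if and only if k ≡ 2 (mod 7). -/

import Mathlib

open scoped Classical in
/-- A finite simple graph `G` on a finite vertex type is `k`-edge magic if there is a
labeling of its edges that is a bijection onto `{k, k+1, ..., k+q-1}` (where `q` is the
number of edges) such that all the induced vertex sums (the sum of the labels of the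
edges incident to a vertex) are congruent modulo the number of vertices. -/
def IsKEdgeMagic {V : Type*} [Fintype V] (G : SimpleGraph V) (k : ℕ) : Prop :=
  ∃ f : Sym2 V → ℕ,
    Set.BijOn f G.edgeSet ((fun i => k + i) '' Set.Iio G.edgeFinset.card) ∧
    ∃ c : ZMod (Fintype.card V),
      ∀ v : V, ((∑ e ∈ G.incidenceFinset v, f e : ℕ) : ZMod (Fintype.card V)) = c

/-- A concrete simple graph on `Fin 7`. -/
def G6 : SimpleGraph (Fin 7) where
  Adj a b := a ≠ b ∧ s(a,b) ∈ ({s(0,1), s(1,2), s(2,3), s(3,4), s(4,5), s(5,6), s(6,0), s(0,2), s(2,4), s(4,6), s(0,4)} : Finset (Sym2 (Fin 7)))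
  symm := ⟨fun a b h => ⟨h.1.symm, by rw [show s(b,a) = s(a,b) from Sym2.eq_swap]; exact h.2⟩⟩
  loopless := ⟨fun a h => h.1 rfl⟩

/-- The edge set of `G6` as an explicit finset. -/
def Eset : Finset (Sym2 (Fin 7)) := {s(0,1), s(1,2), s(2,3), s(3,4), s(4,5), s(5,6), s(6,0), s(0,2), s(2,4), s(4,6), s(0,4)}

/-- The incidence finsets of `G6`, explicitly. -/
def inc6 : Fin 7 → Finset (Sym2 (Fin 7)) :=
  ![{s(0,1), s(6,0), s(0,2), s(0,4)},
    {s(0,1), s(1,2)},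
    {s(1,2), s(2,3), s(0,2), s(2,4)},
    {s(2,3), s(3,4)},
    {s(3,4), s(4,5), s(2,4), s(4,6), s(0,4)},
    {s(4,5), s(5,6)},
    {s(5,6), s(6,0), s(4,6)}]

/-- A concrete magic labeling offset. -/
def gLab : Sym2 (Fin 7) → ℕ := fun e =>
  if e = s(0,1) then 0 else if e = s(1,2) then 1 else if e = s(2,3) then 2
  else if e = s(3,4) then 6 else if e = s(4,5) then 7 else if e = s(5,6) then 8
  else if e = s(6,0) then 9 else if e = s(0,2) then 5 else if e = s(2,4) then 3
  else if e = s(4,6) then 10 else if e = s(0,4) then 4 else 0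

lemma mem_edgeSet_iff (e : Sym2 (Fin 7)) : e ∈ G6.edgeSet ↔ e ∈ Eset := by
  induction e using Sym2.ind with
  | _ a b =>
    rw [SimpleGraph.mem_edgeSet]
    revert a b
    show ∀ a b : Fin 7, (a ≠ b ∧ s(a,b) ∈ Eset) ↔ s(a,b) ∈ Eset
    decide

lemma edgeSet_eq : G6.edgeSet = ↑Eset := Set.ext fun e => (mem_edgeSet_iff e).trans (Finset.mem_coe).symm

lemma edgeFinset_eq (inst : Fintype G6.edgeSet) :
    @SimpleGraph.edgeFinset _ G6 inst = Eset := by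
  ext e
  rw [SimpleGraph.mem_edgeFinset, mem_edgeSet_iff]

lemma incidenceFinset_eq (v : Fin 7) (instN : Fintype (G6.neighborSet v))
    (instD : DecidableEq (Fin 7)) :
    @SimpleGraph.incidenceFinset _ G6 v instN instD = inc6 v := by
  ext e
  rw [SimpleGraph.mem_incidenceFinset, SimpleGraph.incidenceSet, Set.mem_sep_iff, mem_edgeSet_iff]
  clear instN instD
  revert v
  induction e using Sym2.ind with
  | _ a b =>
    revert a b
    decide

section sums
variable (f : Sym2 (Fin 7) → ℕ)

lemma sum_inc0 : ∑ e ∈ inc6 0, f e = f s(0,1) + f s(6,0) + f s(0,2) + f s(0,4) := by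
  show ∑ e ∈ ({s(0,1), s(6,0), s(0,2), s(0,4)} : Finset _), f e = _
  rw [Finset.sum_insert (by decide), Finset.sum_insert (by decide),
    Finset.sum_insert (by decide), Finset.sum_singleton]
  omega

lemma sum_inc1 : ∑ e ∈ inc6 1, f e = f s(0,1) + f s(1,2) := by
  show ∑ e ∈ ({s(0,1), s(1,2)} : Finset _), f e = _
  rw [Finset.sum_insert (by decide), Finset.sum_singleton]

lemma sum_inc2 : ∑ e ∈ inc6 2, f e = f s(1,2) + f s(2,3) + f s(0,2) + f s(2,4) := by
  show ∑ e ∈ ({s(1,2), s(2,3), s(0,2), s(2,4)} : Finset _), f e = _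
  rw [Finset.sum_insert (by decide), Finset.sum_insert (by decide),
    Finset.sum_insert (by decide), Finset.sum_singleton]
  omega

lemma sum_inc3 : ∑ e ∈ inc6 3, f e = f s(2,3) + f s(3,4) := by
  show ∑ e ∈ ({s(2,3), s(3,4)} : Finset _), f e = _
  rw [Finset.sum_insert (by decide), Finset.sum_singleton]

lemma sum_inc4 : ∑ e ∈ inc6 4, f e = f s(3,4) + f s(4,5) + f s(2,4) + f s(4,6) + f s(0,4) := by
  show ∑ e ∈ ({s(3,4), s(4,5), s(2,4), s(4,6), s(0,4)} : Finset _), f e = _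
  rw [Finset.sum_insert (by decide), Finset.sum_insert (by decide),
    Finset.sum_insert (by decide), Finset.sum_insert (by decide), Finset.sum_singleton]
  omega

lemma sum_inc5 : ∑ e ∈ inc6 5, f e = f s(4,5) + f s(5,6) := by
  show ∑ e ∈ ({s(4,5), s(5,6)} : Finset _), f e = _
  rw [Finset.sum_insert (by decide), Finset.sum_singleton]

lemma sum_inc6 : ∑ e ∈ inc6 6, f e = f s(5,6) + f s(6,0) + f s(4,6) := by
  show ∑ e ∈ ({s(5,6), s(6,0), s(4,6)} : Finset _), f e = _
  rw [Finset.sum_insert (by decide), Finset.sum_insert (by decide), Finset.sum_singleton]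
  omega

lemma sum_Eset : ∑ e ∈ Eset, f e =
    f s(0,1) + f s(1,2) + f s(2,3) + f s(3,4) + f s(4,5) + f s(5,6) + f s(6,0)
    + f s(0,2) + f s(2,4) + f s(4,6) + f s(0,4) := by
  show ∑ e ∈ ({s(0,1), s(1,2), s(2,3), s(3,4), s(4,5), s(5,6), s(6,0), s(0,2), s(2,4), s(4,6), s(0,4)} : Finset _), f e = _
  rw [Finset.sum_insert (by decide), Finset.sum_insert (by decide), Finset.sum_insert (by decide),
    Finset.sum_insert (by decide), Finset.sum_insert (by decide), Finset.sum_insert (by decide),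
    Finset.sum_insert (by decide), Finset.sum_insert (by decide), Finset.sum_insert (by decide),
    Finset.sum_insert (by decide), Finset.sum_singleton]
  omega

lemma double_count : ∑ v : Fin 7, ∑ e ∈ inc6 v, f e = 2 * ∑ e ∈ Eset, f e := by
  rw [Fin.sum_univ_seven, sum_inc0, sum_inc1, sum_inc2, sum_inc3, sum_inc4, sum_inc5,
    sum_inc6, sum_Eset]
  omega

end sums

theorem kEdgeMagic_iff_6 (k : ℕ) : IsKEdgeMagic G6 k ↔ k ≡ 2 [MOD 7] := by
  unfold IsKEdgeMagic
  rw [edgeFinset_eq, show Eset.card = 11 from by decide]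
  have hn : Fintype.card (Fin 7) = 7 := Fintype.card_fin 7
  have himg : ((fun i => k + i) '' Set.Iio 11) = ↑((Finset.range 11).image (k + ·)) := by
    ext y
    simp [Set.mem_Iio, Finset.mem_image, Finset.mem_range, eq_comm]
  constructor
  · rintro ⟨f, hbij, c, hc⟩
    simp only [incidenceFinset_eq] at hc
    rw [edgeSet_eq, himg] at hbij
    have hsumE : ∑ e ∈ Eset, f e = 11 * k + 55 := by
      have h1 : ∑ e ∈ Eset, f e = ∑ y ∈ (Finset.range 11).image (fun x => k + x), y :=
        Finset.sum_nbij f (fun a ha => hbij.mapsTo ha) hbij.injOn hbij.surjOn (fun a _ => rfl)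
      rw [h1, Finset.sum_image (fun a _ b _ h => by omega), Finset.sum_add_distrib,
        Finset.sum_const, Finset.card_range, show ∑ i ∈ Finset.range 11, i = 55 from by decide,
        smul_eq_mul]
    have hsum : ((∑ v : Fin 7, ∑ e ∈ inc6 v, f e : ℕ) : ZMod (Fintype.card (Fin 7)))
        = ∑ _v : Fin 7, c := by
      rw [Nat.cast_sum]
      exact Finset.sum_congr rfl fun v _ => hc v
    rw [double_count, hsumE, Finset.sum_const, Finset.card_univ] at hsum
    rw [show Fintype.card (Fin 7) • c = ((Fintype.card (Fin 7) : ℕ) : ZMod (Fintype.card (Fin 7))) * c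
        from nsmul_eq_mul _ _, ZMod.natCast_self, zero_mul] at hsum
    have hdvd := (ZMod.natCast_eq_zero_iff _ _).mp hsum
    rw [hn] at hdvd
    show k % 7 = 2 % 7
    omega
  · intro hk
    refine ⟨fun e => k + gLab e, ?_, 5, ?_⟩
    · rw [edgeSet_eq, himg]
      refine ⟨?_, ?_, ?_⟩
      · intro e he
        rw [Finset.mem_coe] at he ⊢
        rw [Finset.mem_image]
        exact ⟨gLab e, Finset.mem_range.mpr (by revert e he; decide), rfl⟩
      · intro a ha b hb hab
        rw [Finset.mem_coe] at ha hb
        have hab' : k + gLab a = k + gLab b := hab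
        exact (by decide : ∀ a ∈ Eset, ∀ b ∈ Eset, gLab a = gLab b → a = b) a ha b hb (by omega)
      · intro y hy
        rw [Finset.mem_coe, Finset.mem_image] at hy
        obtain ⟨i, hi, rfl⟩ := hy
        rw [Finset.mem_range] at hi
        have : ∃ e ∈ Eset, gLab e = i := by revert hi; revert i; decide
        obtain ⟨e, he, hge⟩ := this
        exact ⟨e, Finset.mem_coe.mpr he, by simp [hge]⟩
    · intro v
      simp only [incidenceFinset_eq]
      rw [Finset.sum_add_distrib, Finset.sum_const, smul_eq_mul,
        show (5 : ZMod (Fintype.card (Fin 7))) = ((5 : ℕ) : ZMod (Fintype.card (Fin 7))) from by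
          norm_cast,
        ZMod.natCast_eq_natCast_iff, hn]
      calc (inc6 v).card * k + ∑ e ∈ inc6 v, gLab e
          ≡ (inc6 v).card * 2 + ∑ e ∈ inc6 v, gLab e [MOD 7] :=
            Nat.ModEq.add_right _ (Nat.ModEq.mul_left _ hk)
        _ ≡ 5 [MOD 7] := by revert v; decide
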